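/- Let ψ be a hyperbolic automorphism of 𝔻 with fixed points a, b ∈ ∂𝔻 and let μ, ν ≥ 0. Define ω_{μ,ν}(z) = (a − z)^μ (b − z)^ν on 𝔻. Then the quotient |ω_{μ,ν}(ψ(z)) / ω_{μ,ν}(z)| is bounded above and bounded away from zero on 𝔻. -/

import Mathlib

open Complex Filter Metric Set

noncomputable section

open scoped Topology Real

/-- An injective holomorphic function on an open set has nonvanishing derivative. -/
lemma deriv_ne_zero_of_injOn {f : ℂ → ℂ} {s : Set ℂ} (hs : IsOpen s)
    (hf : DifferentiableOn ℂ f s) (hinj : InjOn f s) {z₀ : ℂ} (hz₀ : z₀ ∈ s) :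
    deriv f z₀ ≠ 0 := by
  intro hder
  have hfa : AnalyticAt ℂ f z₀ := hf.analyticAt (hs.mem_nhds hz₀)
  have hFa : AnalyticAt ℂ (fun z => f z - f z₀) z₀ := hfa.sub analyticAt_const
  -- the order of vanishing is finite
  have hne : ¬ (∀ᶠ z in 𝓝 z₀, f z - f z₀ = 0) := by
    intro hev
    obtain ⟨ε, hε, hball⟩ := Metric.eventually_nhds_iff.mp hev
    obtain ⟨ε', hε', hball'⟩ := Metric.nhds_basis_ball.mem_iff.mp (hs.mem_nhds hz₀)
    set δ := min ε ε' / 2 with hδ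
    have hδ0 : 0 < δ := by positivity
    have hδε : δ < ε :=
      lt_of_lt_of_le (by simpa [hδ] using half_lt_self (lt_min hε hε')) (min_le_left _ _)
    have hδε' : δ < ε' :=
      lt_of_lt_of_le (by simpa [hδ] using half_lt_self (lt_min hε hε')) (min_le_right _ _)
    have hdist : dist (z₀ + (δ:ℂ)) z₀ = δ := by
      have h' : (z₀ + (δ:ℂ)) - z₀ = (δ:ℂ) := by ring
      rw [Complex.dist_eq, h', Complex.norm_real, Real.norm_eq_abs, abs_of_pos hδ0]
    have hz1 : z₀ + (δ:ℂ) ∈ s := hball' (by simp [mem_ball, hdist, hδε'])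
    have hfz : f (z₀ + (δ:ℂ)) - f z₀ = 0 := hball (by rw [hdist]; exact hδε)
    have heq : z₀ + (δ:ℂ) = z₀ := hinj hz1 hz₀ (by rwa [sub_eq_zero] at hfz)
    have : (δ:ℂ) = 0 := by linear_combination heq
    exact hδ0.ne' (by exact_mod_cast this)
  have horder : analyticOrderAt (fun z => f z - f z₀) z₀ ≠ ⊤ := fun htop => hne (analyticOrderAt_eq_top.mp htop)
  set n := (analyticOrderAt (fun z => f z - f z₀) z₀).toNat with hn
  have horder' : analyticOrderAt (fun z => f z - f z₀) z₀ = n := (ENat.coe_toNat horder).symm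
  obtain ⟨g, hg, hg0, hev⟩ := hFa.analyticOrderAt_eq_natCast.mp horder'
  simp only [smul_eq_mul] at hev
  have hn0 : n ≠ 0 := by
    intro h0
    apply hg0
    have := hev.self_of_nhds
    simp [h0] at this
    linear_combination -this
  have hn1 : n ≠ 1 := by
    intro h1
    apply hg0
    have hev' : f =ᶠ[𝓝 z₀] (fun z => f z₀ + (z - z₀) * g z) := by
      filter_upwards [hev] with z hz
      rw [h1, pow_one] at hz
      linear_combination hz
    have hda : HasDerivAt (fun z => f z₀ + (z - z₀) * g z)
        (0 + (1 * g z₀ + (z₀ - z₀) * deriv g z₀)) z₀ :=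
      (hasDerivAt_const z₀ (f z₀)).add
        (((hasDerivAt_id z₀).sub_const z₀).mul hg.differentiableAt.hasDerivAt)
    have hd2 : deriv f z₀ = g z₀ := by
      rw [hev'.deriv_eq, hda.deriv]; ring
    rw [← hd2, hder]
  have hn2 : 2 ≤ n := by omega
  have hncne : (n : ℂ) ≠ 0 := Nat.cast_ne_zero.mpr hn0
  -- construct an analytic n-th root of g near z₀
  set c₀ := g z₀ with hc₀
  set r : ℂ → ℂ := fun z => Complex.exp ((Complex.log (g z * c₀⁻¹) + Complex.log c₀) * (n : ℂ)⁻¹)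
    with hr
  have hG1 : g z₀ * c₀⁻¹ = 1 := mul_inv_cancel₀ hg0
  have hGa : AnalyticAt ℂ (fun z => g z * c₀⁻¹) z₀ := hg.mul analyticAt_const
  have hra : AnalyticAt ℂ r z₀ := by
    apply analyticAt_cexp.comp
    apply AnalyticAt.mul _ analyticAt_const
    apply AnalyticAt.add _ analyticAt_const
    exact (analyticAt_clog (by rw [hG1]; exact Complex.one_mem_slitPlane)).comp hGa
  set h : ℂ → ℂ := fun z => (z - z₀) * r z with hh
  have hha : AnalyticAt ℂ h z₀ := (analyticAt_id.sub analyticAt_const).mul hra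
  have hr0 : r z₀ ≠ 0 := Complex.exp_ne_zero _
  have hda : HasDerivAt h (1 * r z₀ + (z₀ - z₀) * deriv r z₀) z₀ :=
    ((hasDerivAt_id z₀).sub_const z₀).mul hra.differentiableAt.hasDerivAt
  have hsd : HasStrictDerivAt h (r z₀) z₀ := by
    have h1 := hha.hasStrictFDerivAt.hasStrictDerivAt
    rw [fderiv_apply_one_eq_deriv, hda.deriv] at h1
    simpa using h1
  -- the n-th root property holds near z₀
  have hEV : ∀ᶠ z in 𝓝 z₀, (f z - f z₀ = (z - z₀) ^ n * g z) ∧ z ∈ s ∧ r z ^ n = g z := by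
    have hgne : ∀ᶠ z in 𝓝 z₀, g z ≠ 0 := hg.continuousAt.eventually_ne hg0
    filter_upwards [hev, hs.mem_nhds hz₀, hgne] with z h1 h2 h3
    refine ⟨h1, h2, ?_⟩
    have hGz : g z * c₀⁻¹ ≠ 0 := by
      apply mul_ne_zero h3 (inv_ne_zero hg0)
    calc r z ^ n = Complex.exp ((n : ℂ) * ((Complex.log (g z * c₀⁻¹) + Complex.log c₀) * (n : ℂ)⁻¹)) := by
          rw [hr, ← Complex.exp_nat_mul]
      _ = Complex.exp (Complex.log (g z * c₀⁻¹) + Complex.log c₀) := by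
          congr 1; field_simp
      _ = (g z * c₀⁻¹) * c₀ := by rw [Complex.exp_add, Complex.exp_log hGz, Complex.exp_log hg0]
      _ = g z := by field_simp
  obtain ⟨ε, hε0, hball⟩ := Metric.eventually_nhds_iff.mp hEV
  -- the root of unity
  set ζ : ℂ := Complex.exp (2 * (π:ℂ) * I * (n:ℂ)⁻¹) with hζ
  have hζn : ζ ^ n = 1 := by
    rw [hζ, ← Complex.exp_nat_mul]
    have : (n:ℂ) * (2 * (π:ℂ) * I * (n:ℂ)⁻¹) = 2 * (π:ℂ) * I := by field_simp
    rw [this, Complex.exp_two_pi_mul_I]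
  have hζ1 : ζ ≠ 1 := by
    intro h1
    rw [hζ, Complex.exp_eq_one_iff] at h1
    obtain ⟨k, hk⟩ := h1
    have h2πI : (2 * (π:ℂ) * I) ≠ 0 := by
      simp [Complex.ofReal_ne_zero, Real.pi_ne_zero, Complex.I_ne_zero]
    have hkn : ((n:ℂ))⁻¹ = (k:ℂ) := by
      have : 2 * (π:ℂ) * I * (n:ℂ)⁻¹ = 2 * (π:ℂ) * I * (k:ℂ) := by rw [hk]; ring
      exact mul_left_cancel₀ h2πI this
    have hkn' : ((n:ℝ))⁻¹ = (k:ℝ) := by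
      have := congrArg Complex.re hkn
      simpa using this
    have hnR : (2:ℝ) ≤ (n:ℝ) := by exact_mod_cast hn2
    rcases le_or_gt k 0 with hk0 | hk0
    · have : (k:ℝ) ≤ 0 := by exact_mod_cast hk0
      nlinarith [inv_pos.mpr (lt_of_lt_of_le (by norm_num : (0:ℝ) < 2) hnR)]
    · have : (1:ℝ) ≤ (k:ℝ) := by exact_mod_cast hk0
      have hinv : ((n:ℝ))⁻¹ ≤ 1/2 := by
        rw [inv_le_comm₀ (by linarith) (by norm_num)] at *
        · linarith
      linarith
  have habsζ : ‖ζ‖ = 1 := by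
    have harg : 2 * (π:ℂ) * I * (n:ℂ)⁻¹ = ((2 * π / n : ℝ):ℂ) * I := by push_cast; ring
    rw [hζ, harg, Complex.norm_exp_ofReal_mul_I]
  -- local inverse
  have hz00 : h z₀ = 0 := by simp [hh]
  have hri := (hsd.hasStrictFDerivAt_equiv hr0).eventually_right_inverse
  have htend := (hsd.hasStrictFDerivAt_equiv hr0).localInverse_tendsto
  set li := (hsd.hasStrictFDerivAt_equiv hr0).localInverse h _ z₀ with hli
  rw [hz00] at hri htend
  have hW : ∀ᶠ y in 𝓝 (0:ℂ), h (li y) = y ∧ li y ∈ ball z₀ ε := by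
    filter_upwards [hri, htend (ball_mem_nhds z₀ hε0)] with y h1 h2
    exact ⟨h1, h2⟩
  obtain ⟨δ, hδ0, hWball⟩ := Metric.eventually_nhds_iff.mp hW
  set w : ℂ := ((δ/2 : ℝ) : ℂ) with hw
  have hw0 : w ≠ 0 := Complex.ofReal_ne_zero.mpr (by positivity)
  have hwd : dist w 0 < δ := by
    rw [hw, dist_zero_right, Complex.norm_real, Real.norm_eq_abs,
      abs_of_pos (by positivity : (0:ℝ) < δ/2)]
    linarith
  have hwd' : dist (ζ * w) 0 < δ := by
    simp only [dist_zero_right] at hwd ⊢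
    rw [norm_mul]
    simp only [habsζ, one_mul]
    exact hwd
  obtain ⟨hli1, hmem1⟩ := hWball hwd
  obtain ⟨hli2, hmem2⟩ := hWball hwd'
  set z₁ := li w with hz₁
  set z₂ := li (ζ * w) with hz₂
  obtain ⟨he1, hs1, hroot1⟩ := hball (mem_ball.mp hmem1)
  obtain ⟨he2, hs2, hroot2⟩ := hball (mem_ball.mp hmem2)
  have hfz1 : f z₁ - f z₀ = w ^ n := by
    rw [he1, ← hroot1, ← mul_pow]
    exact congrArg (· ^ n) hli1
  have hfz2 : f z₂ - f z₀ = w ^ n := by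
    rw [he2, ← hroot2, ← mul_pow]
    have : (z₂ - z₀) * r z₂ = ζ * w := hli2
    rw [this, mul_pow, hζn, one_mul]
  have hfeq : f z₁ = f z₂ := by
    have := hfz1.trans hfz2.symm
    linear_combination this
  have hzz : z₁ = z₂ := hinj hs1 hs2 hfeq
  have hwzw : w = ζ * w := by
    calc w = h z₁ := hli1.symm
      _ = h z₂ := by rw [hzz]
      _ = ζ * w := hli2
  have hz10 : (ζ - 1) * w = 0 := by linear_combination -hwzw
  rcases mul_eq_zero.mp hz10 with h' | h'
  · exact hζ1 (by linear_combination h')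
  · exact hw0 h'

lemma invFunOn_spec {f : ℂ → ℂ} {D : Set ℂ} (hbij : BijOn f D D) :
    (∀ w ∈ D, Function.invFunOn f D w ∈ D ∧ f (Function.invFunOn f D w) = w) ∧
      ∀ z ∈ D, Function.invFunOn f D (f z) = z := by
  have hmem : ∀ w ∈ D, Function.invFunOn f D w ∈ D ∧ f (Function.invFunOn f D w) = w := by
    intro w hw
    have hex : ∃ a ∈ D, f a = w := by
      obtain ⟨z, hz, hfz⟩ := hbij.surjOn hw
      exact ⟨z, hz, hfz⟩
    exact ⟨Function.invFunOn_mem hex, Function.invFunOn_eq hex⟩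
  refine ⟨hmem, fun z hz => ?_⟩
  obtain ⟨h1, h2⟩ := hmem (f z) (hbij.mapsTo hz)
  exact hbij.injOn h1 hz h2

lemma invFunOn_differentiableOn {f : ℂ → ℂ} {D : Set ℂ} (hD : IsOpen D)
    (hf : DifferentiableOn ℂ f D) (hbij : BijOn f D D) :
    DifferentiableOn ℂ (Function.invFunOn f D) D := by
  obtain ⟨hmem, hleft⟩ := invFunOn_spec hbij
  set g := Function.invFunOn f D with hg
  intro w₀ hw₀
  obtain ⟨hz₀D, hfz₀⟩ := hmem w₀ hw₀
  set z₀ := g w₀ with hz₀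
  have hfa : AnalyticAt ℂ f z₀ := hf.analyticAt (hD.mem_nhds hz₀D)
  have hfs : HasStrictDerivAt f (deriv f z₀) z₀ := by
    have h1 := hfa.hasStrictFDerivAt.hasStrictDerivAt
    rwa [fderiv_apply_one_eq_deriv] at h1
  have hne : deriv f z₀ ≠ 0 := deriv_ne_zero_of_injOn hD hf hbij.injOn hz₀D
  have hri := (hfs.hasStrictFDerivAt_equiv hne).eventually_right_inverse
  have htend := (hfs.hasStrictFDerivAt_equiv hne).localInverse_tendsto
  have hlid := (hfs.hasStrictFDerivAt_equiv hne).to_localInverse.differentiableAt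
  set li := (hfs.hasStrictFDerivAt_equiv hne).localInverse f _ z₀ with hli
  rw [hfz₀] at hri htend hlid
  have hev : g =ᶠ[𝓝 w₀] li := by
    filter_upwards [hri, htend (hD.mem_nhds hz₀D), hD.mem_nhds hw₀] with w h1 h2 h3
    exact hbij.injOn (hmem w h3).1 h2 (by rw [(hmem w h3).2, h1])
  exact (hlid.congr_of_eventuallyEq hev).differentiableWithinAt

lemma eqOn_closure_of_continuousOn {f g : ℂ → ℂ} {s : Set ℂ} (h : EqOn f g s)
    (hf : ContinuousOn f (closure s)) (hg : ContinuousOn g (closure s)) :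
    EqOn f g (closure s) := by
  intro x hx
  have hne : (𝓝[s] x).NeBot := mem_closure_iff_nhdsWithin_neBot.mp hx
  have h1 : Tendsto f (𝓝[s] x) (𝓝 (f x)) :=
    (hf x hx).mono_left (nhdsWithin_mono x subset_closure)
  have h2 : Tendsto g (𝓝[s] x) (𝓝 (g x)) :=
    (hg x hx).mono_left (nhdsWithin_mono x subset_closure)
  have h3 : Tendsto f (𝓝[s] x) (𝓝 (g x)) :=
    h2.congr' (by filter_upwards [self_mem_nhdsWithin] with y hy using (h hy).symm)
  exact tendsto_nhds_unique h1 h3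

lemma normSq_blaschke_id (w u : ℂ) :
    Complex.normSq (1 - (starRingEnd ℂ) w * u) - Complex.normSq (w - u)
      = (1 - Complex.normSq w) * (1 - Complex.normSq u) := by
  simp only [Complex.normSq_apply, Complex.sub_re, Complex.sub_im, Complex.mul_re,
    Complex.mul_im, Complex.one_re, Complex.one_im, Complex.conj_re, Complex.conj_im]
  ring

/-- A hyperbolic automorphism of the open unit disc `𝔻`, with attractive fixed
point `a` and repulsive fixed point `b` on the unit circle, and (real) derivative
values `da = ψ'(a) ∈ (0,1)`, `db = ψ'(b) ∈ (1,∞)` with `da * db = 1`. -/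
structure HypAuto where
  ψ : ℂ → ℂ
  a : ℂ
  b : ℂ
  da : ℝ
  db : ℝ
  ha : ‖a‖ = 1
  hb : ‖b‖ = 1
  hab : a ≠ b
  holo : ∃ R > 1, DifferentiableOn ℂ ψ (ball (0:ℂ) R)
  bij : BijOn ψ (ball (0:ℂ) 1) (ball (0:ℂ) 1)
  noFix : ∀ z ∈ ball (0:ℂ) 1, ψ z ≠ z
  fixa : ψ a = a
  fixb : ψ b = b
  hda : deriv ψ a = (da : ℂ)
  hdb : deriv ψ b = (db : ℂ)
  hda1 : 0 < da ∧ da < 1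
  hdb1 : 1 < db
  hmulder : da * db = 1
  attract : ∀ z ∈ ball (0:ℂ) 1, Tendsto (fun n => ψ^[n] z) atTop (nhds a)

lemma one_sub_ne {v : ℂ} (hv : ‖v‖ < 1) : (1:ℂ) - v ≠ 0 := by
  intro h
  have : v = 1 := by linear_combination -h
  rw [this] at hv
  simp at hv

lemma blaschke_denom_ne {w u : ℂ} (hw : ‖w‖ < 1) (hu : ‖u‖ ≤ 1) :
    (1:ℂ) - (starRingEnd ℂ) w * u ≠ 0 := by
  apply one_sub_ne
  rw [norm_mul, Complex.norm_conj]
  calc ‖w‖ * ‖u‖ ≤ ‖w‖ * 1 :=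
        mul_le_mul_of_nonneg_left hu (norm_nonneg w)
    _ < 1 := by rwa [mul_one]

lemma blaschke_abs_lt {w u : ℂ} (hw : ‖w‖ < 1) (hu : ‖u‖ < 1) :
    ‖((w - u) / (1 - (starRingEnd ℂ) w * u))‖ < 1 := by
  have hd := blaschke_denom_ne hw hu.le
  rw [norm_div, div_lt_one (norm_pos_iff.mpr hd), Complex.norm_def, Complex.norm_def]
  apply Real.sqrt_lt_sqrt (Complex.normSq_nonneg _)
  have hid := normSq_blaschke_id w u
  have h1 : Complex.normSq w < 1 := by
    have := Complex.sq_norm w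
    nlinarith [norm_nonneg w]
  have h2 : Complex.normSq u < 1 := by
    have := Complex.sq_norm u
    nlinarith [norm_nonneg u]
  nlinarith
lemma blaschke_invol {w u : ℂ} (hw : ‖w‖ < 1) (hu : ‖u‖ < 1) :
    (w - ((w - u) / (1 - (starRingEnd ℂ) w * u))) /
      (1 - (starRingEnd ℂ) w * ((w - u) / (1 - (starRingEnd ℂ) w * u))) = u := by
  set k := (starRingEnd ℂ) w with hk
  have hd1 : (1:ℂ) - k * u ≠ 0 := blaschke_denom_ne hw hu.le
  have hd2 : (1:ℂ) - k * w ≠ 0 := blaschke_denom_ne hw hw.le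
  have e1 : w - (w - u) / (1 - k * u) = u * (1 - k * w) / (1 - k * u) := by
    rw [eq_div_iff hd1, sub_mul, div_mul_cancel₀ _ hd1]
    ring
  have e2 : 1 - k * ((w - u) / (1 - k * u)) = (1 - k * w) / (1 - k * u) := by
    field_simp
    ring
  rw [e1, e2, div_div_div_cancel_right₀ hd1, mul_div_assoc, div_self hd2, mul_one]

/-- The automorphism `ψ` is injective on the closed unit disc. -/
lemma psi_injOn_closedBall (h : HypAuto) : InjOn h.ψ (closedBall (0:ℂ) 1) := by
  obtain ⟨R, hR1, hψdR⟩ := h.holo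
  set D := ball (0:ℂ) 1 with hD
  have hDopen : IsOpen D := isOpen_ball
  have hψD : DifferentiableOn ℂ h.ψ D := hψdR.mono (ball_subset_ball hR1.le)
  set w₀ := h.ψ 0 with hw₀def
  have hw₀ : ‖w₀‖ < 1 := by
    have := h.bij.mapsTo (mem_ball_self one_pos)
    rwa [mem_ball_zero_iff] at this
  set k := (starRingEnd ℂ) w₀ with hk
  set B : ℂ → ℂ := fun z => (w₀ - z) / (1 - k * z) with hB
  have hBd : ∀ u : ℂ, ‖u‖ < 1 → DifferentiableAt ℂ B u := by
    intro u hu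
    exact ((differentiableAt_const w₀).sub differentiableAt_id).div
      ((differentiableAt_const 1).sub ((differentiableAt_const k).mul differentiableAt_id))
      (blaschke_denom_ne hw₀ hu.le)
  have hBmaps : MapsTo B D D := fun u hu =>
    mem_ball_zero_iff.mpr (blaschke_abs_lt hw₀ (mem_ball_zero_iff.mp hu))
  have hBinvol : ∀ u ∈ D, B (B u) = u := fun u hu =>
    blaschke_invol hw₀ (mem_ball_zero_iff.mp hu)
  have hBbij : BijOn B D D :=
    ⟨hBmaps, fun u hu v hv he => by rw [← hBinvol u hu, ← hBinvol v hv, he],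
      fun u hu => ⟨B u, hBmaps hu, hBinvol u hu⟩⟩
  set f : ℂ → ℂ := B ∘ h.ψ with hf
  have hfd : DifferentiableOn ℂ f D := by
    intro z hz
    exact ((hBd _ (mem_ball_zero_iff.mp (h.bij.mapsTo hz))).comp z
      (hψD.differentiableAt (hDopen.mem_nhds hz))).differentiableWithinAt
  have hfbij : BijOn f D D := hBbij.comp h.bij
  have hf0 : f 0 = 0 := by simp [hf, hB, hw₀def]
  obtain ⟨hgmem, hgleft⟩ := invFunOn_spec hfbij
  set g := Function.invFunOn f D with hg
  have hgd : DifferentiableOn ℂ g D := invFunOn_differentiableOn hDopen hfd hfbij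
  have h0D : (0:ℂ) ∈ D := mem_ball_self one_pos
  have hg0 : g 0 = 0 := by
    have h1 := (hgmem 0 h0D).2
    exact hfbij.injOn (hgmem 0 h0D).1 h0D (by rw [h1, hf0])
  -- Schwarz in both directions
  have habsf : ∀ z ∈ D, ‖(f z)‖ ≤ ‖z‖ := fun z hz =>
    Complex.norm_le_norm_of_mapsTo_ball_self hfd (hfbij.mapsTo.mono_right ball_subset_closedBall) hf0 (mem_ball_zero_iff.mp hz)
  have habsg : ∀ z ∈ D, ‖(g z)‖ ≤ ‖z‖ := fun z hz =>
    Complex.norm_le_norm_of_mapsTo_ball_self hgd (fun u hu => ball_subset_closedBall (hgmem u hu).1) hg0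
      (mem_ball_zero_iff.mp hz)
  have habseq : ∀ z ∈ D, ‖(f z)‖ = ‖z‖ := by
    intro z hz
    refine le_antisymm (habsf z hz) ?_
    have h1 := habsg (f z) (hfbij.mapsTo hz)
    rwa [hgleft z hz] at h1
  -- equality case of Schwarz
  set z₅ : ℂ := ((1/2 : ℝ) : ℂ) with hz₅
  have habsz₅ : ‖z₅‖ = 1/2 := by
    rw [hz₅, Complex.norm_real]; norm_num
  have hz₅D : z₅ ∈ D := by
    rw [mem_ball_zero_iff]
    show ‖z₅‖ < 1
    rw [habsz₅]; norm_num
  have hz₅ne : z₅ ≠ 0 := by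
    intro h'
    rw [h'] at habsz₅; simp at habsz₅
  set q := dslope f 0 z₅ with hq
  have hdsq : ‖q‖ = 1 := by
    rw [hq, dslope_of_ne _ hz₅ne, slope_def_field, hf0, sub_zero, sub_zero, norm_div,
      habseq z₅ hz₅D, div_self (by rw [habsz₅]; norm_num : ‖z₅‖ ≠ 0)]
  have hmaps' : MapsTo f D (ball (f 0) 1) := by rw [hf0]; exact hfbij.mapsTo
  have haff := Complex.affine_of_mapsTo_ball_of_exists_norm_dslope_eq_div hfd (hmaps'.mono_right ball_subset_closedBall) hz₅D
    (by rw [hdsq]; norm_num)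
  have hfq : ∀ z ∈ D, f z = q * z := by
    intro z hz
    have := haff hz
    simp only [hf0, sub_zero, smul_eq_mul, zero_add] at this
    rw [this, mul_comm]
  -- ψ agrees with a Möbius transformation on D
  set M : ℂ → ℂ := fun z => (w₀ - q * z) / (1 - k * (q * z)) with hM
  have hq0 : q ≠ 0 := by
    intro h'
    rw [h'] at hdsq; simp at hdsq
  have hψM : EqOn h.ψ M D := by
    intro z hz
    have h1 : f z = B (h.ψ z) := rfl
    have h2 : B (f z) = h.ψ z := by
      rw [h1]; exact hBinvol _ (h.bij.mapsTo hz)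
    rw [← h2, hfq z hz]
  -- extend to the closed ball by continuity
  have hclosure : closure D = closedBall (0:ℂ) 1 := closure_ball (0:ℂ) one_ne_zero
  have hqz_lt : ∀ z : ℂ, ‖z‖ ≤ 1 → ‖(k * (q * z))‖ < 1 := by
    intro z hz
    rw [norm_mul, norm_mul, hk, Complex.norm_conj, hdsq, one_mul]
    calc ‖w₀‖ * ‖z‖ ≤ ‖w₀‖ * 1 :=
          mul_le_mul_of_nonneg_left hz (norm_nonneg _)
      _ < 1 := by rwa [mul_one]
  have hMc : ContinuousOn M (closedBall (0:ℂ) 1) := by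
    intro z hz
    rw [mem_closedBall_zero_iff] at hz
    apply ContinuousAt.continuousWithinAt
    apply ContinuousAt.div
    · exact (continuousAt_const.sub (continuousAt_const.mul continuousAt_id))
    · exact (continuousAt_const.sub (continuousAt_const.mul
        (continuousAt_const.mul continuousAt_id)))
    · exact one_sub_ne (hqz_lt z hz)
  have hψc : ContinuousOn h.ψ (closedBall (0:ℂ) 1) :=
    (hψdR.continuousOn).mono (closedBall_subset_ball hR1)
  have hψMc : EqOn h.ψ M (closedBall (0:ℂ) 1) := by
    rw [← hclosure]
    exact eqOn_closure_of_continuousOn hψM (by rwa [hclosure]) (by rwa [hclosure])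
  -- M is injective on the closed ball
  intro z₁ h₁ z₂ h₂ he
  rw [hψMc h₁, hψMc h₂] at he
  rw [mem_closedBall_zero_iff] at h₁ h₂
  have hd1 : (1:ℂ) - k * (q * z₁) ≠ 0 := one_sub_ne (hqz_lt z₁ h₁)
  have hd2 : (1:ℂ) - k * (q * z₂) ≠ 0 := one_sub_ne (hqz_lt z₂ h₂)
  rw [hM, div_eq_div_iff hd1 hd2] at he
  have hkey : (1 - k * w₀) * q * (z₁ - z₂) = 0 := by linear_combination -he
  have hkw : (1:ℂ) - k * w₀ ≠ 0 := blaschke_denom_ne hw₀ hw₀.le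
  rcases mul_eq_zero.mp hkey with h' | h'
  · rcases mul_eq_zero.mp h' with h'' | h''
    · exact absurd h'' hkw
    · exact absurd h'' hq0
  · linear_combination h'

/-- two-sided bounds for the modulus of a dslope factor on the closed ball -/
lemma dslope_bounds (h : HypAuto) {p : ℂ} (hp : ‖p‖ = 1) (hfix : h.ψ p = p)
    (hder : deriv h.ψ p ≠ 0) :
    ∃ cp Cp : ℝ, 0 < cp ∧
      ∀ z ∈ closedBall (0:ℂ) 1, cp ≤ ‖(dslope h.ψ p z)‖ ∧
        ‖(dslope h.ψ p z)‖ ≤ Cp := by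
  obtain ⟨R, hR1, hψdR⟩ := h.holo
  set K := closedBall (0:ℂ) 1 with hK
  have hKc : IsCompact K := isCompact_closedBall _ _
  have hpR : p ∈ ball (0:ℂ) R := by
    rw [mem_ball_zero_iff]
    show ‖p‖ < R
    rw [hp]; exact hR1
  have hpK : p ∈ K := by
    rw [mem_closedBall_zero_iff]
    show ‖p‖ ≤ 1
    rw [hp]
  have hKR : K ⊆ ball (0:ℂ) R := closedBall_subset_ball hR1
  set G := dslope h.ψ p with hG
  have hGd : DifferentiableOn ℂ G (ball (0:ℂ) R) :=
    (differentiableOn_dslope (isOpen_ball.mem_nhds hpR)).mpr hψdR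
  have hGc : ContinuousOn (fun z => ‖(G z)‖) K :=
    continuous_norm.comp_continuousOn (hGd.continuousOn.mono hKR)
  have hGne : ∀ z ∈ K, G z ≠ 0 := by
    intro z hz
    by_cases hzp : z = p
    · rw [hG, hzp, dslope_same]
      exact hder
    · rw [hG, dslope_of_ne _ hzp, slope_def_field, hfix]
      apply div_ne_zero
      · intro h0
        apply hzp
        apply psi_injOn_closedBall h hz hpK
        rw [sub_eq_zero] at h0
        rw [h0, hfix]
      · exact sub_ne_zero.mpr hzp
  obtain ⟨xa, hxaK, hxa⟩ := hKc.exists_isMinOn ⟨0, by simp [hK]⟩ hGc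
  obtain ⟨Xa, hXaK, hXa⟩ := hKc.exists_isMaxOn ⟨0, by simp [hK]⟩ hGc
  rw [isMinOn_iff] at hxa
  rw [isMaxOn_iff] at hXa
  refine ⟨‖(G xa)‖, ‖(G Xa)‖, ?_, fun z hz => ⟨hxa z hz, hXa z hz⟩⟩
  exact norm_pos_iff.mpr (hGne xa hxaK)

/-- For `ω_{μ,ν}(z) = (a-z)^μ (b-z)^ν`, the quotient `|ω_{μ,ν}(ψ z) / ω_{μ,ν} z|`
is bounded above and bounded away from zero on the unit disc. -/
theorem omega_quotient_bounded (h : HypAuto) (μ ν : ℝ) (hμ : 0 ≤ μ) (hν : 0 ≤ ν) :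
    ∃ c C : ℝ, 0 < c ∧
      ∀ z ∈ ball (0:ℂ) 1,
        c ≤ ‖(((h.a - h.ψ z) ^ (μ : ℂ) * (h.b - h.ψ z) ^ (ν : ℂ)) /
              ((h.a - z) ^ (μ : ℂ) * (h.b - z) ^ (ν : ℂ)))‖ ∧
        ‖(((h.a - h.ψ z) ^ (μ : ℂ) * (h.b - h.ψ z) ^ (ν : ℂ)) /
              ((h.a - z) ^ (μ : ℂ) * (h.b - z) ^ (ν : ℂ)))‖ ≤ C := by
  have hderA : deriv h.ψ h.a ≠ 0 := by
    rw [h.hda]; exact Complex.ofReal_ne_zero.mpr (ne_of_gt h.hda1.1)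
  have hderB : deriv h.ψ h.b ≠ 0 := by
    rw [h.hdb]; exact Complex.ofReal_ne_zero.mpr (by linarith [h.hdb1])
  obtain ⟨ca, Ca, hca, hAbnd⟩ := dslope_bounds h h.ha h.fixa hderA
  obtain ⟨cb, Cb, hcb, hBbnd⟩ := dslope_bounds h h.hb h.fixb hderB
  refine ⟨ca ^ μ * cb ^ ν, Ca ^ μ * Cb ^ ν, by positivity, ?_⟩
  intro z hz
  have hzK : z ∈ closedBall (0:ℂ) 1 := ball_subset_closedBall hz
  have hzlt : ‖z‖ < 1 := mem_ball_zero_iff.mp hz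
  have hza : z ≠ h.a := fun h' => by rw [h', h.ha] at hzlt; exact lt_irrefl _ hzlt
  have hzb : z ≠ h.b := fun h' => by rw [h', h.hb] at hzlt; exact lt_irrefl _ hzlt
  have haz : h.a - z ≠ 0 := sub_ne_zero.mpr (Ne.symm hza)
  have hbz : h.b - z ≠ 0 := sub_ne_zero.mpr (Ne.symm hzb)
  set Ga := dslope h.ψ h.a with hGa
  set Gb := dslope h.ψ h.b with hGb
  have hIDa : h.a - h.ψ z = Ga z * (h.a - z) := by
    rw [hGa, dslope_of_ne _ hza, slope_def_field, h.fixa, div_mul_eq_mul_div,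
      eq_div_iff (sub_ne_zero.mpr hza)]
    ring
  have hIDb : h.b - h.ψ z = Gb z * (h.b - z) := by
    rw [hGb, dslope_of_ne _ hzb, slope_def_field, h.fixb, div_mul_eq_mul_div,
      eq_div_iff (sub_ne_zero.mpr hzb)]
    ring
  have habsa : ‖(h.a - h.ψ z)‖ = ‖(Ga z)‖ * ‖(h.a - z)‖ := by
    rw [hIDa, norm_mul]
  have habsb : ‖(h.b - h.ψ z)‖ = ‖(Gb z)‖ * ‖(h.b - z)‖ := by
    rw [hIDb, norm_mul]
  have hQ : ‖(((h.a - h.ψ z) ^ (μ : ℂ) * (h.b - h.ψ z) ^ (ν : ℂ)) /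
        ((h.a - z) ^ (μ : ℂ) * (h.b - z) ^ (ν : ℂ)))‖
      = ‖(Ga z)‖ ^ μ * ‖(Gb z)‖ ^ ν := by
    rw [norm_div, norm_mul, norm_mul, Complex.norm_cpow_real, Complex.norm_cpow_real,
      Complex.norm_cpow_real, Complex.norm_cpow_real, habsa, habsb,
      Real.mul_rpow (norm_nonneg _) (norm_nonneg _),
      Real.mul_rpow (norm_nonneg _) (norm_nonneg _)]
    have h1 : (0:ℝ) < ‖(h.a - z)‖ ^ μ :=
      Real.rpow_pos_of_pos (norm_pos_iff.mpr haz) μ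
    have h2 : (0:ℝ) < ‖(h.b - z)‖ ^ ν :=
      Real.rpow_pos_of_pos (norm_pos_iff.mpr hbz) ν
    field_simp
  rw [hQ]
  obtain ⟨hA1, hA2⟩ := hAbnd z hzK
  obtain ⟨hB1, hB2⟩ := hBbnd z hzK
  constructor
  · apply mul_le_mul (Real.rpow_le_rpow hca.le hA1 hμ) (Real.rpow_le_rpow hcb.le hB1 hν)
      (Real.rpow_nonneg hcb.le ν) (Real.rpow_nonneg (norm_nonneg _) μ)
  · exact mul_le_mul (Real.rpow_le_rpow (norm_nonneg _) hA2 hμ)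
      (Real.rpow_le_rpow (norm_nonneg _) hB2 hν)
      (Real.rpow_nonneg (norm_nonneg _) ν)
      (Real.rpow_nonneg ((norm_nonneg _).trans hA2) μ)
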